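/- Let G be a finite connected cograph on n ≥ 2 vertices, i.e., a connected graph containing no induced path on 4 vertices. If G has a cut-vertex then meg(G) = n - 1, and otherwise meg(G) = n. -/

import Mathlib

open SimpleGraph

/-- A pair of vertices `u`, `v` monitors an edge `e` if `u` and `v` are reachable from
each other and `e` belongs to every shortest path (walk of length `G.dist u v`)
between `u` and `v`. -/
def Monitors {V : Type*} (G : SimpleGraph V) (u v : V) (e : Sym2 V) : Prop :=
  G.Reachable u v ∧ ∀ p : G.Walk u v, p.length = G.dist u v → e ∈ p.edges

/-- A monitoring edge-geodetic set of `G`: every edge of `G` is monitored by some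
pair of vertices of `M`. -/
def IsMEGSet {V : Type*} (G : SimpleGraph V) (M : Set V) : Prop :=
  ∀ e ∈ G.edgeSet, ∃ u ∈ M, ∃ v ∈ M, Monitors G u v e

/-- The monitoring edge-geodetic number of `G`: the minimum size of an MEG-set. -/
noncomputable def meg {V : Type*} [Fintype V] (G : SimpleGraph V) : ℕ :=
  sInf {n : ℕ | ∃ M : Finset V, IsMEGSet G ↑M ∧ M.card = n}

section Helpers

variable {V : Type*}

lemma walk_len1 {G : SimpleGraph V} {x y : V} (p : G.Walk x y) (h : p.length = 1) :
    ∃ h1 : G.Adj x y, p = Walk.cons h1 Walk.nil := by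
  cases p with
  | nil => simp at h
  | cons h1 q =>
    cases q with
    | nil => exact ⟨h1, rfl⟩
    | cons h2 r => simp [Walk.length_cons] at h

lemma walk_len2 {G : SimpleGraph V} {x y : V} (p : G.Walk x y) (h : p.length = 2) :
    ∃ (m : V) (h1 : G.Adj x m) (h2 : G.Adj m y), p = Walk.cons h1 (Walk.cons h2 Walk.nil) := by
  cases p with
  | nil => simp at h
  | cons h1 q =>
    cases q with
    | nil => simp [Walk.length_cons] at h
    | cons h2 r =>
      cases r with
      | nil => exact ⟨_, h1, h2, rfl⟩
      | cons h3 t => simp [Walk.length_cons] at h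

lemma dist_le_two' {W : Type*} (H : SimpleGraph W)
    (hH : ∀ a b c d : W, H.Adj a b → H.Adj b c → H.Adj c d →
      ¬ H.Adj a c → ¬ H.Adj a d → ¬ H.Adj b d → False)
    {x y : W} (h : H.Reachable x y) : H.dist x y ≤ 2 := by
  by_contra hlt
  push_neg at hlt
  obtain ⟨p, hp⟩ := h.exists_walk_length_eq_dist
  cases p with
  | nil => rw [SimpleGraph.dist_self] at hlt; omega
  | cons h1 q =>
    cases q with
    | nil => simp at hp; omega
    | cons h2 r =>
      cases r with
      | nil => simp [Walk.length_cons] at hp; omega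
      | cons h3 t =>
        simp only [Walk.length_cons] at hp
        rename_i b c d
        have hac : ¬ H.Adj x c := by
          intro ha
          have := H.dist_le (Walk.cons ha (Walk.cons h3 t))
          simp only [Walk.length_cons] at this
          omega
        have had : ¬ H.Adj x d := by
          intro ha
          have := H.dist_le (Walk.cons ha t)
          simp only [Walk.length_cons] at this
          omega
        have hbd : ¬ H.Adj b d := by
          intro ha
          have := H.dist_le (Walk.cons h1 (Walk.cons ha t))
          simp only [Walk.length_cons] at this
          omega
        exact hH x b c d h1 h2 h3 hac had hbd

lemma monitors_self (G : SimpleGraph V) {u v : V} (h : G.Adj u v) :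
    Monitors G u v s(u, v) := by
  refine ⟨h.reachable, ?_⟩
  intro p hp
  rw [dist_eq_one_iff_adj.mpr h] at hp
  obtain ⟨h1, rfl⟩ := walk_len1 p hp
  simp

lemma exists_nonreachable {G : SimpleGraph V} {S : Set V}
    (h : ¬ (G.induce S).Connected) {a : V} (ha : a ∈ S) :
    ∃ r : S, ¬ (G.induce S).Reachable ⟨a, ha⟩ r := by
  by_contra hc
  push_neg at hc
  exact h ((connected_iff _).mpr ⟨fun s t => (hc s).symm.trans (hc t), ⟨⟨a, ha⟩⟩⟩)

lemma induce_adj_of_adj {G : SimpleGraph V} {S : Set V} {a b : V} (ha : a ∈ S) (hb : b ∈ S)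
    (h : G.Adj a b) : (G.induce S).Adj ⟨a, ha⟩ ⟨b, hb⟩ := by
  simpa using h

lemma hP4_induce {G : SimpleGraph V}
    (hP4 : ∀ a b c d : V, G.Adj a b → G.Adj b c → G.Adj c d →
      ¬ G.Adj a c → ¬ G.Adj a d → ¬ G.Adj b d → False) (S : Set V) :
    ∀ a b c d : S, (G.induce S).Adj a b → (G.induce S).Adj b c → (G.induce S).Adj c d →
      ¬ (G.induce S).Adj a c → ¬ (G.induce S).Adj a d → ¬ (G.induce S).Adj b d → False := by
  intro a b c d h1 h2 h3 n1 n2 n3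
  simp only [comap_adj, Function.Embedding.coe_subtype] at h1 h2 h3 n1 n2 n3
  exact hP4 a b c d h1 h2 h3 n1 n2 n3

/-- a cut vertex of a connected P4-free graph is universal -/
lemma cut_universal {G : SimpleGraph V} (hconn : G.Connected)
    (hP4 : ∀ a b c d : V, G.Adj a b → G.Adj b c → G.Adj c d →
      ¬ G.Adj a c → ¬ G.Adj a d → ¬ G.Adj b d → False)
    {z : V} (hz : ¬ (G.induce ({z}ᶜ : Set V)).Connected) :
    ∀ a, a ≠ z → G.Adj z a := by
  intro a ha
  have hA : a ∈ ({z}ᶜ : Set V) := by simpa using ha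
  obtain ⟨r, hr⟩ := exists_nonreachable hz hA
  have hane : a ≠ (r : V) := by
    intro h
    exact hr (by rw [show (⟨a, hA⟩ : ({z}ᶜ : Set V)) = r from Subtype.ext h])
  have hnadj : ¬ G.Adj a (r : V) := fun h =>
    hr (induce_adj_of_adj hA r.2 h).reachable
  have hd : G.dist a (r : V) ≤ 2 := dist_le_two' G hP4 (hconn a r)
  have hd0 : G.dist a (r : V) ≠ 0 := fun h => hane ((hconn a r).dist_eq_zero_iff.mp h)
  have hd1 : G.dist a (r : V) ≠ 1 := fun h => hnadj (dist_eq_one_iff_adj.mp h)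
  have hd2 : G.dist a (r : V) = 2 := by omega
  obtain ⟨p, hp⟩ := (hconn a (r : V)).exists_walk_length_eq_dist
  obtain ⟨m, h1, h2, rfl⟩ := walk_len2 p (by rw [hp, hd2])
  by_cases hm : m = z
  · subst hm
    exact h1.symm
  · have hmS : m ∈ ({z}ᶜ : Set V) := by simpa using hm
    exact absurd (((induce_adj_of_adj hA hmS h1).reachable).trans
      (induce_adj_of_adj hmS r.2 h2).reachable) hr

lemma cut_unique {G : SimpleGraph V} (hconn : G.Connected)
    (hP4 : ∀ a b c d : V, G.Adj a b → G.Adj b c → G.Adj c d →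
      ¬ G.Adj a c → ¬ G.Adj a d → ¬ G.Adj b d → False)
    {z₁ z₂ : V} (h1 : ¬ (G.induce ({z₁}ᶜ : Set V)).Connected)
    (h2 : ¬ (G.induce ({z₂}ᶜ : Set V)).Connected) : z₁ = z₂ := by
  by_contra hne
  have huniv := cut_universal hconn hP4 h2
  apply h1
  have hz2 : z₂ ∈ ({z₁}ᶜ : Set V) := by simpa using (Ne.symm hne)
  refine (connected_iff _).mpr ⟨?_, ⟨⟨z₂, hz2⟩⟩⟩
  have key : ∀ s : ({z₁}ᶜ : Set V), (G.induce ({z₁}ᶜ : Set V)).Reachable s ⟨z₂, hz2⟩ := by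
    intro s
    by_cases h : (s : V) = z₂
    · rw [show s = (⟨z₂, hz2⟩ : ({z₁}ᶜ : Set V)) from Subtype.ext h]
    · exact (induce_adj_of_adj s.2 hz2 (huniv (s : V) h).symm).reachable
  exact fun s t => (key s).trans (key t).symm

/-- every non-cut-vertex is in every MEG-set (for connected P4-free graphs) -/
lemma mem_of_not_cut [Fintype V] {G : SimpleGraph V} (hconn : G.Connected)
    (hn : 2 ≤ Fintype.card V)
    (hP4 : ∀ a b c d : V, G.Adj a b → G.Adj b c → G.Adj c d →
      ¬ G.Adj a c → ¬ G.Adj a d → ¬ G.Adj b d → False)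
    {M : Set V} (hM : IsMEGSet G M) {w : V}
    (hw : (G.induce ({w}ᶜ : Set V)).Connected) : w ∈ M := by
  obtain ⟨u, hu⟩ : ∃ u, G.Adj w u := by
    obtain ⟨y, hy⟩ := Fintype.exists_ne_of_one_lt_card (by omega) w
    obtain ⟨p⟩ := hconn w y
    cases p with
    | nil => exact absurd rfl hy
    | cons h1 q => exact ⟨_, h1⟩
  have he : s(u, w) ∈ G.edgeSet := hu.symm
  obtain ⟨x, hx, y, hy, hrxy, hmon⟩ := hM _ he
  by_contra hwM
  have hwx : w ≠ x := fun h => hwM (h ▸ hx)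
  have hwy : w ≠ y := fun h => hwM (h ▸ hy)
  have hd2 : G.dist x y ≤ 2 := dist_le_two' G hP4 hrxy
  obtain ⟨p, hp⟩ := hrxy.exists_walk_length_eq_dist
  have hep := hmon p hp
  have h012 : G.dist x y = 0 ∨ G.dist x y = 1 ∨ G.dist x y = 2 := by omega
  rcases h012 with h0 | h1 | h2
  · have : p.edges = [] := List.eq_nil_of_length_eq_zero (by rw [Walk.length_edges, hp, h0])
    rw [this] at hep
    simp at hep
  · obtain ⟨ha, rfl⟩ := walk_len1 p (by rw [hp, h1])
    simp only [Walk.edges_cons, Walk.edges_nil, List.mem_singleton] at hep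
    rw [Sym2.eq_iff] at hep
    rcases hep with ⟨_, h⟩ | ⟨_, h⟩
    · exact hwy h
    · exact hwx h
  · obtain ⟨m, ha1, ha2, rfl⟩ := walk_len2 p (by rw [hp, h2])
    simp only [Walk.edges_cons, Walk.edges_nil, List.mem_cons, List.mem_singleton,
      List.not_mem_nil, or_false] at hep
    have hwm : w = m := by
      rcases hep with h | h <;> rw [Sym2.eq_iff] at h <;>
        rcases h with ⟨h', h''⟩ | ⟨h', h''⟩
      · exact h''
      · exact absurd h'' hwx
      · exact absurd h'' hwy
      · exact h''
    subst hwm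
    have hxy_ne : x ≠ y := by
      intro h
      rw [h] at h2
      simp [SimpleGraph.dist_self] at h2
    have hnadj : ¬ G.Adj x y := by
      intro h
      rw [dist_eq_one_iff_adj.mpr h] at h2
      omega
    have huniq : ∀ m', G.Adj x m' → G.Adj m' y → m' = w := by
      intro m' a1 a2
      have hq := hmon (Walk.cons a1 (Walk.cons a2 Walk.nil)) (by simp [h2])
      simp only [Walk.edges_cons, Walk.edges_nil, List.mem_cons, List.mem_singleton,
        List.not_mem_nil, or_false] at hq
      rcases hq with h | h <;> rw [Sym2.eq_iff] at h <;>
        rcases h with ⟨h', h''⟩ | ⟨h', h''⟩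
      · exact h''.symm
      · exact absurd h'' hwx
      · exact absurd h'' hwy
      · exact h''.symm
    have hxS : x ∈ ({w}ᶜ : Set V) := by simpa using (Ne.symm hwx)
    have hyS : y ∈ ({w}ᶜ : Set V) := by simpa using (Ne.symm hwy)
    have hr' := hw.preconnected ⟨x, hxS⟩ ⟨y, hyS⟩
    have hd' := dist_le_two' _ (hP4_induce hP4 ({w}ᶜ : Set V)) hr'
    have h0' : (G.induce ({w}ᶜ : Set V)).dist ⟨x, hxS⟩ ⟨y, hyS⟩ ≠ 0 := by
      intro h
      exact hxy_ne (congrArg Subtype.val (hr'.dist_eq_zero_iff.mp h))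
    have h1' : (G.induce ({w}ᶜ : Set V)).dist ⟨x, hxS⟩ ⟨y, hyS⟩ ≠ 1 := by
      intro h
      have := dist_eq_one_iff_adj.mp h
      simp only [comap_adj, Function.Embedding.coe_subtype] at this
      exact hnadj this
    have h2' : (G.induce ({w}ᶜ : Set V)).dist ⟨x, hxS⟩ ⟨y, hyS⟩ ≠ 2 := by
      intro h
      obtain ⟨q, hq⟩ := hr'.exists_walk_length_eq_dist
      obtain ⟨mm, b1, b2, rfl⟩ := walk_len2 q (by rw [hq, h])
      simp only [comap_adj, Function.Embedding.coe_subtype] at b1 b2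
      have := huniq (mm : V) b1 b2
      exact mm.2 this
    omega

/-- monitoring edges at a cut vertex from outside -/
lemma cut_monitor {G : SimpleGraph V} (hconn : G.Connected)
    (hP4 : ∀ a b c d : V, G.Adj a b → G.Adj b c → G.Adj c d →
      ¬ G.Adj a c → ¬ G.Adj a d → ¬ G.Adj b d → False)
    {z v : V} (hz : ¬ (G.induce ({z}ᶜ : Set V)).Connected) (hadj : G.Adj v z) :
    ∃ y, y ≠ z ∧ Monitors G v y s(v, z) := by
  have hvS : v ∈ ({z}ᶜ : Set V) := by simpa using hadj.ne
  obtain ⟨r, hr⟩ := exists_nonreachable hz hvS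
  refine ⟨(r : V), fun h => r.2 h, hconn v r, ?_⟩
  have hvne : v ≠ (r : V) := by
    intro h
    exact hr (by rw [show (⟨v, hvS⟩ : ({z}ᶜ : Set V)) = r from Subtype.ext h])
  have hnadj : ¬ G.Adj v (r : V) := fun h => hr (induce_adj_of_adj hvS r.2 h).reachable
  have hd : G.dist v (r : V) ≤ 2 := dist_le_two' G hP4 (hconn v r)
  have hd0 : G.dist v (r : V) ≠ 0 := fun h => hvne ((hconn v r).dist_eq_zero_iff.mp h)
  have hd1 : G.dist v (r : V) ≠ 1 := fun h => hnadj (dist_eq_one_iff_adj.mp h)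
  have hd2 : G.dist v (r : V) = 2 := by omega
  intro p hp
  obtain ⟨m, h1, h2, rfl⟩ := walk_len2 p (by rw [hp, hd2])
  have hm : m = z := by
    by_contra hm
    have hmS : m ∈ ({z}ᶜ : Set V) := by simpa using hm
    exact hr (((induce_adj_of_adj hvS hmS h1).reachable).trans
      (induce_adj_of_adj hmS r.2 h2).reachable)
  subst hm
  simp

end Helpers

/-- a connected cograph (no induced `P₄`) on `n ≥ 2` vertices satisfies
`meg G = n - 1` if it has a cut-vertex, and `meg G = n` otherwise. -/
theorem meg_of_cograph {V : Type*} [Fintype V] (G : SimpleGraph V)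
    (hconn : G.Connected) (hn : 2 ≤ Fintype.card V)
    (hP4 : ∀ a b c d : V, G.Adj a b → G.Adj b c → G.Adj c d →
      ¬ G.Adj a c → ¬ G.Adj a d → ¬ G.Adj b d → False) :
    ((∃ v : V, ¬ (G.induce ({v}ᶜ : Set V)).Connected) →
        meg G = Fintype.card V - 1) ∧
    ((¬ ∃ v : V, ¬ (G.induce ({v}ᶜ : Set V)).Connected) →
        meg G = Fintype.card V) := by
  classical
  constructor
  · rintro ⟨z, hz⟩
    have hMEG : IsMEGSet G ↑(({z} : Finset V)ᶜ) := by
      intro e he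
      induction e using Sym2.ind with
      | _ u v =>
        rw [mem_edgeSet] at he
        by_cases hu : u = z
        · subst hu
          have hvz : v ≠ u := he.ne'
          obtain ⟨y, hyz, hmon⟩ := cut_monitor hconn hP4 hz he.symm
          refine ⟨v, by simp [hvz], y, by simp [hyz], ?_⟩
          rw [show s(u, v) = s(v, u) from Sym2.eq_swap]
          exact hmon
        · by_cases hv : v = z
          · subst hv
            obtain ⟨y, hyz, hmon⟩ := cut_monitor hconn hP4 hz he
            exact ⟨u, by simp [hu], y, by simp [hyz], hmon⟩
          · exact ⟨u, by simp [hu], v, by simp [hv], monitors_self G he⟩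
    have hcard : (({z} : Finset V)ᶜ).card = Fintype.card V - 1 := by
      rw [Finset.card_compl, Finset.card_singleton]
    unfold meg
    apply le_antisymm
    · exact Nat.sInf_le ⟨_, hMEG, hcard⟩
    · refine le_csInf ⟨_, _, hMEG, hcard⟩ ?_
      rintro b ⟨M, hM, rfl⟩
      have hsub : Mᶜ ⊆ {z} := by
        intro w hw
        rw [Finset.mem_compl] at hw
        have hwcut : ¬ (G.induce ({w}ᶜ : Set V)).Connected := by
          intro hc
          exact hw (by simpa using mem_of_not_cut hconn hn hP4 hM hc)
        simp [cut_unique hconn hP4 hwcut hz]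
      have h1 := Finset.card_le_card hsub
      rw [Finset.card_compl, Finset.card_singleton] at h1
      have h2 := M.card_le_univ
      omega
  · intro hnc
    push_neg at hnc
    have hMEG : IsMEGSet G ↑(Finset.univ : Finset V) := by
      intro e he
      induction e using Sym2.ind with
      | _ u v =>
        rw [mem_edgeSet] at he
        exact ⟨u, by simp, v, by simp, monitors_self G he⟩
    unfold meg
    apply le_antisymm
    · exact Nat.sInf_le ⟨_, hMEG, Finset.card_univ⟩
    · refine le_csInf ⟨_, _, hMEG, Finset.card_univ⟩ ?_
      rintro b ⟨M, hM, rfl⟩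
      have : M = Finset.univ :=
        Finset.eq_univ_iff_forall.mpr fun w =>
          by simpa using mem_of_not_cut hconn hn hP4 hM (hnc w)
      rw [this, Finset.card_univ]
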